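/- For n ≥ 1, evaluating the Narayana polynomial at x = -1 gives: N_{2n}(-1) = 0 and N_{2n+1}(-1) = (-1)^{n+1} C_n, where C_n is the n-th Catalan number. -/

import Mathlib

open Polynomial Finset

lemma expand_pow (d m : ℕ) :
    (1 - X ^ d : ℚ[X]) ^ m
      = ∑ j ∈ range (m + 1), C ((-1:ℚ)^j * m.choose j) * X ^ (d*j) := by
  rw [sub_eq_add_neg, add_comm, add_pow]
  refine Finset.sum_congr rfl fun j hj => ?_
  rw [neg_pow, one_pow, mul_one, pow_mul]
  simp [mul_comm, C_mul, mul_assoc]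

lemma coeff_expand (d m N : ℕ) (hd : 0 < d) :
    ((1 - X ^ d : ℚ[X]) ^ m).coeff N
      = if d ∣ N then (-1:ℚ) ^ (N / d) * m.choose (N / d) else 0 := by
  rw [expand_pow, finset_sum_coeff]
  simp only [coeff_C_mul, coeff_X_pow]
  by_cases h : d ∣ N
  · obtain ⟨j, rfl⟩ := h
    rw [if_pos ⟨j, rfl⟩, Nat.mul_div_cancel_left _ hd]
    by_cases hj : j < m + 1
    · rw [Finset.sum_eq_single j]
      · simp
      · intro b _ hb
        rw [if_neg, mul_zero]
        intro h
        exact hb (Nat.eq_of_mul_eq_mul_left hd h.symm)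
      · intro h; exact absurd hj (by simpa using h)
    · rw [Finset.sum_eq_zero, Nat.choose_eq_zero_of_lt (by omega), Nat.cast_zero, mul_zero]
      intro b hb
      simp only [mem_range] at hb
      rw [if_neg, mul_zero]
      intro h
      have := Nat.eq_of_mul_eq_mul_left hd h
      omega
  · rw [if_neg h]
    refine Finset.sum_eq_zero fun b _ => ?_
    rw [if_neg (fun hb => h ⟨b, hb⟩), mul_zero]

lemma conv (m N : ℕ) :
    ∑ k ∈ Finset.range (N + 1), (-1 : ℚ) ^ k * m.choose k * m.choose (N - k)
      = ((1 - X ^ 2 : ℚ[X]) ^ m).coeff N := by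
  have h : ((1 - X ^ 2 : ℚ[X]) ^ m) = (1 - X) ^ m * (1 + X) ^ m := by
    rw [← mul_pow]; ring_nf
  have h1 : ∀ k, ((1 - X : ℚ[X]) ^ m).coeff k = (-1:ℚ) ^ k * m.choose k := by
    intro k
    have := coeff_expand 1 m k one_pos
    simpa using this
  rw [h, Polynomial.coeff_mul, Finset.Nat.sum_antidiagonal_eq_sum_range_succ_mk]
  refine Finset.sum_congr rfl fun k hk => ?_
  rw [h1, coeff_one_add_X_pow, mul_assoc]

lemma main_sum (m : ℕ) (hm : 1 ≤ m) :
    ∑ k ∈ Finset.Icc 1 m, (-1:ℚ) ^ k * m.choose k * m.choose (k-1)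
      = ((1 - X ^ 2 : ℚ[X]) ^ m).coeff (m+1) := by
  rw [← conv m (m+1)]
  have hsub : Finset.Icc 1 m ⊆ Finset.range (m + 1 + 1) := by
    intro k hk; simp only [Finset.mem_Icc] at hk; simp only [Finset.mem_range]; omega
  calc ∑ k ∈ Finset.Icc 1 m, (-1:ℚ) ^ k * m.choose k * m.choose (k-1)
      = ∑ k ∈ Finset.Icc 1 m, (-1:ℚ) ^ k * m.choose k * m.choose (m + 1 - k) := by
        refine Finset.sum_congr rfl fun k hk => ?_
        simp only [Finset.mem_Icc] at hk
        rw [show m + 1 - k = m - (k - 1) by omega, Nat.choose_symm (by omega)]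
    _ = ∑ k ∈ Finset.range (m + 1 + 1), (-1:ℚ) ^ k * m.choose k * m.choose (m + 1 - k) := by
        refine Finset.sum_subset hsub fun k hk hk' => ?_
        simp only [Finset.mem_range] at hk
        simp only [Finset.mem_Icc, not_and_or, not_le] at hk'
        rcases hk' with h | h
        · have : k = 0 := by omega
          subst this
          rw [Nat.choose_eq_zero_of_lt (by omega : m < m + 1 - 0)]
          simp
        · have : k = m + 1 := by omega
          subst this
          rw [Nat.choose_eq_zero_of_lt (by omega : m < m + 1)]
          simp

lemma catalan_rel (n : ℕ) : ((2*n+1).choose (n+1) : ℚ) = (2*n+1) * catalan n := by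
  have h1 : (n + 1) * catalan n = (2*n).choose n := succ_mul_catalan_eq_centralBinom n
  have h2 : (2*n+1) * (2*n).choose n = (2*n+1).choose (n+1) * (n+1) := by
    have := Nat.add_one_mul_choose_eq (2*n) n
    simpa [Nat.succ_eq_add_one] using this
  have h3 : (n+1) * ((2*n+1).choose (n+1)) = (n+1) * ((2*n+1) * catalan n) := by
    calc (n+1) * ((2*n+1).choose (n+1)) = (2*n+1) * (2*n).choose n := by
          rw [mul_comm]; exact h2.symm
    _ = (2*n+1) * ((n+1) * catalan n) := by rw [h1]
    _ = (n+1) * ((2*n+1) * catalan n) := by ring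
  have := Nat.eq_of_mul_eq_mul_left (by omega : 0 < n+1) h3
  exact_mod_cast congrArg (Nat.cast : ℕ → ℚ) this

theorem narayana_poly_at_neg_one (n : ℕ) (hn : 1 ≤ n) :
    (∑ k ∈ Finset.Icc 1 (2 * n),
        (((2 * n).choose k * (2 * n).choose (k - 1) : ℚ) / (2 * n)) * (-1 : ℚ) ^ k = 0)
    ∧ (∑ k ∈ Finset.Icc 1 (2 * n + 1),
        (((2 * n + 1).choose k * (2 * n + 1).choose (k - 1) : ℚ) / (2 * n + 1)) * (-1 : ℚ) ^ k
          = (-1 : ℚ) ^ (n + 1) * catalan n) := by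
  constructor
  · have h := main_sum (2*n) (by omega)
    rw [coeff_expand 2 (2*n) (2*n+1) two_pos, if_neg (by omega)] at h
    calc ∑ k ∈ Finset.Icc 1 (2 * n),
        (((2 * n).choose k * (2 * n).choose (k - 1) : ℚ) / (2 * n)) * (-1 : ℚ) ^ k
        = (1/(2*n:ℚ)) * ∑ k ∈ Finset.Icc 1 (2*n),
            (-1:ℚ)^k * (2*n).choose k * (2*n).choose (k-1) := by
          rw [Finset.mul_sum]
          exact Finset.sum_congr rfl fun k _ => by ring
    _ = 0 := by rw [h]; ring
  · have h := main_sum (2*n+1) (by omega)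
    rw [show 2*n+1+1 = 2*n+2 by ring,
        coeff_expand 2 (2*n+1) (2*n+2) two_pos, if_pos ⟨n+1, by ring⟩,
        show (2*n+2)/2 = n+1 by omega] at h
    have hne : (2*n+1 : ℚ) ≠ 0 := by positivity
    calc ∑ k ∈ Finset.Icc 1 (2 * n + 1),
        (((2 * n + 1).choose k * (2 * n + 1).choose (k - 1) : ℚ) / (2 * n + 1)) * (-1 : ℚ) ^ k
        = (1/(2*n+1:ℚ)) * ∑ k ∈ Finset.Icc 1 (2*n+1),
            (-1:ℚ)^k * (2*n+1).choose k * (2*n+1).choose (k-1) := by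
          rw [Finset.mul_sum]
          exact Finset.sum_congr rfl fun k _ => by ring
    _ = (1/(2*n+1:ℚ)) * ((-1:ℚ)^(n+1) * (2*n+1).choose (n+1)) := by rw [h]
    _ = (-1 : ℚ) ^ (n + 1) * catalan n := by
          rw [catalan_rel]
          field_simp
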